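/- Let (X_{nk})_{1≤k≤k_n, n∈ℕ} be a 2-dimensional square-integrable adapted array with components X_{nk} = (U_{nk}, V_{nk}). Suppose (i) ∑_{k=1}^{k_n} E(‖X_{nk}‖² 1_{{‖X_{nk}‖ ≥ ε}}) → 0 for all ε > 0, and (ii) ∑_{k=1}^{k_n} E(‖X_{nk}‖²) ≤ C for some constant C < ∞ and all n. Then ∑_{k=1}^{k_n} E(U_{nk}V_{nk} | F_{n,k-1}) − ∑_{k=1}^{k_n} U_{nk}V_{nk} → 0 in L¹ as n → ∞. -/

import Mathlib

open MeasureTheory Filter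

private lemma abs_mul_coord_le (x : EuclideanSpace ℝ (Fin 2)) : |x 0 * x 1| ≤ ‖x‖ ^ 2 / 2 := by
  have h : ‖x‖ ^ 2 = x 0 ^ 2 + x 1 ^ 2 := by
    rw [EuclideanSpace.norm_eq, Real.sq_sqrt (by positivity)]
    simp [Fin.sum_univ_two, Real.norm_eq_abs, sq_abs]
  rcases abs_cases (x 0 * x 1) with ⟨h1, _⟩ | ⟨h1, _⟩ <;> rw [h1, h] <;>
    nlinarith [sq_nonneg (x 0 - x 1), sq_nonneg (x 0 + x 1)]

private lemma key_lemma {Ω : Type*} {m0 : MeasurableSpace Ω} (μ : Measure Ω)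
    [IsProbabilityMeasure μ] (K : ℕ) (𝓕 : ℕ → MeasurableSpace Ω)
    (hFmono : Monotone 𝓕) (hFle : ∀ k, 𝓕 k ≤ m0)
    (X : ℕ → Ω → EuclideanSpace ℝ (Fin 2)) (hadapted : ∀ k, StronglyMeasurable[𝓕 k] (X k))
    (hL2 : ∀ k, MemLp (X k) 2 μ) (ε t : ℝ) (hε : 0 < ε) (ht : 0 < t) :
    ∫ ω, |∑ k ∈ Finset.Icc 1 K, (μ[fun ω' => X k ω' 0 * X k ω' 1 | 𝓕 (k - 1)]) ω
          - ∑ k ∈ Finset.Icc 1 K, X k ω 0 * X k ω 1| ∂μ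
      ≤ (ε ^ 2 * (∑ k ∈ Finset.Icc 1 K, ∫ ω, ‖X k ω‖ ^ 2 ∂μ) + t ^ 2) / (2 * t)
        + ∑ k ∈ Finset.Icc 1 K,
            ∫ ω, Set.indicator {ω'' : Ω | ε ≤ ‖X k ω''‖} (fun ω'' => ‖X k ω''‖ ^ 2) ω ∂μ := by
  classical
  set s := Finset.Icc 1 K with hs
  set Y : ℕ → Ω → ℝ := fun k ω => X k ω 0 * X k ω 1 with hYdef
  set A : ℕ → Set Ω := fun k => {ω : Ω | ε ≤ ‖X k ω‖} with hAdef
  have hYk : ∀ k, (fun ω' => X k ω' 0 * X k ω' 1) = Y k := fun _ => rfl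
  have hAksets : ∀ k, {ω'' : Ω | ε ≤ ‖X k ω''‖} = A k := fun _ => rfl
  simp_rw [hYk, hAksets]
  set Sm : ℕ → Ω → ℝ := fun k => (A k)ᶜ.indicator (Y k) with hSmdef
  set L : ℕ → Ω → ℝ := fun k => (A k).indicator (Y k) with hLdef
  -- basic measurability
  have hc : ∀ k (i : Fin 2), StronglyMeasurable[𝓕 k] fun ω => X k ω i := fun k i =>
    (EuclideanSpace.proj i : EuclideanSpace ℝ (Fin 2) →L[ℝ] ℝ).continuous.comp_stronglyMeasurable
      (hadapted k)
  have hYsm : ∀ k, StronglyMeasurable[𝓕 k] (Y k) := fun k => (hc k 0).mul (hc k 1)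
  have hAk : ∀ k, MeasurableSet[𝓕 k] (A k) := fun k =>
    measurableSet_le measurable_const (hadapted k).norm.measurable
  have hA0 : ∀ k, MeasurableSet (A k) := fun k => hFle k _ (hAk k)
  have hSmsm : ∀ k, StronglyMeasurable[𝓕 k] (Sm k) := fun k => (hYsm k).indicator (hAk k).compl
  have hLsm : ∀ k, StronglyMeasurable[𝓕 k] (L k) := fun k => (hYsm k).indicator (hAk k)
  have hYb : ∀ k ω, |Y k ω| ≤ ‖X k ω‖ ^ 2 / 2 := fun k ω => abs_mul_coord_le (X k ω)
  -- integrability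
  have hX2i : ∀ k, Integrable (fun ω => ‖X k ω‖ ^ 2) μ := fun k => (hL2 k).norm.integrable_sq
  have hYi : ∀ k, Integrable (Y k) μ := fun k =>
    Integrable.mono' ((hX2i k).div_const 2) ((hYsm k).mono (hFle k)).aestronglyMeasurable
      (Eventually.of_forall fun ω => by simpa [Real.norm_eq_abs] using hYb k ω)
  have hSmi : ∀ k, Integrable (Sm k) μ := fun k => (hYi k).indicator (hA0 k).compl
  have hLi : ∀ k, Integrable (L k) μ := fun k => (hYi k).indicator (hA0 k)
  have hSmb : ∀ k ω, |Sm k ω| ≤ ε ^ 2 / 2 := by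
    intro k ω
    by_cases hω : ω ∈ (A k)ᶜ
    · rw [hSmdef]; simp only [Set.indicator_of_mem hω]
      have hx : ‖X k ω‖ < ε := not_le.mp hω
      have := hYb k ω
      nlinarith [norm_nonneg (X k ω)]
    · rw [hSmdef]; simp only [Set.indicator_of_notMem hω, abs_zero]
      positivity
  -- conditional expectations of the small parts
  set E : ℕ → Ω → ℝ := fun k => μ[Sm k | 𝓕 (k - 1)] with hEdef
  have hEi : ∀ k, Integrable (E k) μ := fun k => integrable_condExp
  have hEsm : ∀ k, StronglyMeasurable[𝓕 (k - 1)] (E k) := fun k => stronglyMeasurable_condExp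
  have hEb : ∀ k, ∀ᵐ ω ∂μ, |E k ω| ≤ ε ^ 2 / 2 := by
    intro k
    have := ae_bdd_condExp_of_ae_bdd (m := 𝓕 (k - 1)) (μ := μ)
      (R := ⟨ε ^ 2 / 2, by positivity⟩) (Eventually.of_forall (hSmb k))
    exact this
  set D : ℕ → Ω → ℝ := fun k => E k - Sm k with hDdef
  have hDi : ∀ k, Integrable (D k) μ := fun k => (hEi k).sub (hSmi k)
  have hDb : ∀ k, ∀ᵐ ω ∂μ, |D k ω| ≤ ε ^ 2 := by
    intro k
    filter_upwards [hEb k] with ω h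
    have h2 := hSmb k ω
    have : D k ω = E k ω - Sm k ω := rfl
    rw [this]
    calc |E k ω - Sm k ω| ≤ |E k ω| + |Sm k ω| := abs_sub _ _
      _ ≤ ε ^ 2 := by linarith
  have hDaesm : ∀ k, AEStronglyMeasurable (D k) μ := fun k =>
    (((hEsm k).mono (hFle _)).sub ((hSmsm k).mono (hFle _))).aestronglyMeasurable
  have hDDi : ∀ j k, Integrable (D j * D k) μ := by
    intro j k
    refine Integrable.mono' (integrable_const (ε ^ 2 * ε ^ 2)) ((hDaesm j).mul (hDaesm k)) ?_
    filter_upwards [hDb j, hDb k] with ω h1 h2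
    have : ‖(D j * D k) ω‖ = |D j ω| * |D k ω| := by
      simp [Pi.mul_apply, abs_mul]
    rw [this]
    exact mul_le_mul h1 h2 (abs_nonneg _) (by positivity)
  -- orthogonality of martingale differences
  have hod : ∀ j k, j < k → ∫ ω, (D j * D k) ω ∂μ = 0 := by
    intro j k hjk
    have hmk : 𝓕 (k - 1) ≤ m0 := hFle (k - 1)
    have hDjm : StronglyMeasurable[𝓕 (k - 1)] (D j) :=
      ((hEsm j).mono (hFmono (Nat.sub_le_sub_right hjk.le 1))).sub
        ((hSmsm j).mono (hFmono (Nat.le_sub_one_of_lt hjk)))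
    have hDk0 : μ[D k | 𝓕 (k - 1)] =ᵐ[μ] 0 := by
      have h2 : μ[E k | 𝓕 (k - 1)] = E k :=
        condExp_of_stronglyMeasurable hmk (hEsm k) (hEi k)
      calc μ[D k | 𝓕 (k - 1)] =ᵐ[μ] μ[E k | 𝓕 (k - 1)] - μ[Sm k | 𝓕 (k - 1)] :=
            condExp_sub (hEi k) (hSmi k) _
        _ = E k - E k := by rw [h2]
        _ = 0 := sub_self _
    calc ∫ ω, (D j * D k) ω ∂μ = ∫ ω, (μ[D j * D k | 𝓕 (k - 1)]) ω ∂μ :=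
          (integral_condExp hmk).symm
      _ = ∫ ω, (D j * μ[D k | 𝓕 (k - 1)]) ω ∂μ :=
          integral_congr_ae (condExp_mul_of_stronglyMeasurable_left hDjm (hDDi j k) (hDi k))
      _ = 0 := by
          have h3 : (D j * μ[D k | 𝓕 (k - 1)]) =ᵐ[μ] 0 := by
            filter_upwards [hDk0] with ω h
            simp [Pi.mul_apply, h, Pi.zero_apply]
          rw [integral_congr_ae h3]; simp
  -- diagonal bound
  have hIabs : ∀ k, Integrable (fun ω => |Sm k ω|) μ := fun k => (hSmi k).abs
  have hdiag : ∀ k, ∫ ω, (D k * D k) ω ∂μ ≤ ε ^ 2 * ∫ ω, ‖X k ω‖ ^ 2 ∂μ := by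
    intro k
    have hE2i : Integrable (fun ω => E k ω ^ 2) μ := by
      refine Integrable.mono' (integrable_const ((ε ^ 2 / 2) ^ 2))
        (((hEsm k).mono (hFle _)).aestronglyMeasurable.pow 2) ?_
      filter_upwards [hEb k] with ω h
      have : ‖E k ω ^ 2‖ = |E k ω| ^ 2 := by rw [Real.norm_eq_abs, abs_pow]
      rw [this]
      exact pow_le_pow_left₀ (abs_nonneg _) h 2
    have hSm2i : Integrable (fun ω => Sm k ω ^ 2) μ := by
      refine Integrable.mono' (integrable_const ((ε ^ 2 / 2) ^ 2))
        (((hSmsm k).mono (hFle _)).aestronglyMeasurable.pow 2) ?_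
      refine Eventually.of_forall fun ω => ?_
      have : ‖Sm k ω ^ 2‖ = |Sm k ω| ^ 2 := by rw [Real.norm_eq_abs, abs_pow]
      rw [this]
      exact pow_le_pow_left₀ (abs_nonneg _) (hSmb k ω) 2
    have step1 : ∫ ω, (D k * D k) ω ∂μ ≤ ∫ ω, (2 * E k ω ^ 2 + 2 * Sm k ω ^ 2) ∂μ := by
      refine integral_mono_ae (hDDi k k) ((hE2i.const_mul 2).add (hSm2i.const_mul 2)) ?_
      refine Eventually.of_forall fun ω => ?_
      show (E k ω - Sm k ω) * (E k ω - Sm k ω) ≤ 2 * E k ω ^ 2 + 2 * Sm k ω ^ 2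
      nlinarith [sq_nonneg (E k ω + Sm k ω)]
    have step2 : ∫ ω, (2 * E k ω ^ 2 + 2 * Sm k ω ^ 2) ∂μ
        = 2 * ∫ ω, E k ω ^ 2 ∂μ + 2 * ∫ ω, Sm k ω ^ 2 ∂μ := by
      rw [integral_add (hE2i.const_mul 2) (hSm2i.const_mul 2), integral_const_mul,
        integral_const_mul]
    have step3 : ∫ ω, E k ω ^ 2 ∂μ ≤ ε ^ 2 / 2 * ∫ ω, |E k ω| ∂μ := by
      rw [← integral_const_mul]
      refine integral_mono_ae hE2i ((hEi k).abs.const_mul _) ?_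
      filter_upwards [hEb k] with ω h
      nlinarith [abs_nonneg (E k ω), sq_abs (E k ω)]
    have step4 : ∫ ω, |E k ω| ∂μ ≤ ∫ ω, |Sm k ω| ∂μ := integral_abs_condExp_le _
    have step5 : ∫ ω, Sm k ω ^ 2 ∂μ ≤ ε ^ 2 / 2 * ∫ ω, |Sm k ω| ∂μ := by
      rw [← integral_const_mul]
      refine integral_mono_ae hSm2i ((hIabs k).const_mul _) ?_
      refine Eventually.of_forall fun ω => ?_
      nlinarith [abs_nonneg (Sm k ω), sq_abs (Sm k ω), hSmb k ω]
    have step6 : ∫ ω, |Sm k ω| ∂μ ≤ (∫ ω, ‖X k ω‖ ^ 2 ∂μ) / 2 := by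
      rw [div_eq_mul_inv, ← integral_mul_const]
      refine integral_mono (hIabs k) ((hX2i k).mul_const _) fun ω => ?_
      have : |Sm k ω| ≤ ‖X k ω‖ ^ 2 / 2 := by
        by_cases hω : ω ∈ (A k)ᶜ
        · rw [hSmdef]; simp only [Set.indicator_of_mem hω]; exact hYb k ω
        · rw [hSmdef]; simp only [Set.indicator_of_notMem hω, abs_zero]; positivity
      linarith [this]
    have hEabs0 : 0 ≤ ∫ ω, |E k ω| ∂μ := integral_nonneg fun ω => abs_nonneg _
    have hSmabs0 : 0 ≤ ∫ ω, |Sm k ω| ∂μ := integral_nonneg fun ω => abs_nonneg _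
    have he2 : (0:ℝ) ≤ ε ^ 2 / 2 := by positivity
    have m34 := mul_le_mul_of_nonneg_left step4 he2
    have m6 := mul_le_mul_of_nonneg_left step6 he2
    linarith
  -- the martingale part
  set MA : Ω → ℝ := ∑ k ∈ s, D k with hMAdef
  have hMAi : Integrable MA μ := integrable_finset_sum' _ fun k _ => hDi k
  have hMAb : ∀ᵐ ω ∂μ, |MA ω| ≤ s.card * ε ^ 2 := by
    have hall : ∀ᵐ ω ∂μ, ∀ k ∈ s, |D k ω| ≤ ε ^ 2 :=
      (eventually_all_finset s).mpr fun k _ => hDb k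
    filter_upwards [hall] with ω h
    have h1 : MA ω = ∑ k ∈ s, D k ω := by rw [hMAdef, Finset.sum_apply]
    rw [h1]
    calc |∑ k ∈ s, D k ω| ≤ ∑ k ∈ s, |D k ω| := Finset.abs_sum_le_sum_abs _ _
      _ ≤ ∑ _k ∈ s, ε ^ 2 := Finset.sum_le_sum h
      _ = s.card * ε ^ 2 := by rw [Finset.sum_const, nsmul_eq_mul]
  have hMAaesm : AEStronglyMeasurable MA μ := hMAi.aestronglyMeasurable
  have hMA2i : Integrable (fun ω => MA ω ^ 2) μ := by
    refine Integrable.mono' (integrable_const ((s.card * ε ^ 2) ^ 2)) (hMAaesm.pow 2) ?_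
    filter_upwards [hMAb] with ω h
    have : ‖MA ω ^ 2‖ = |MA ω| ^ 2 := by rw [Real.norm_eq_abs, abs_pow]
    rw [this]
    exact pow_le_pow_left₀ (abs_nonneg _) h 2
  have hMAsq : ∫ ω, MA ω ^ 2 ∂μ ≤ ε ^ 2 * ∑ k ∈ s, ∫ ω, ‖X k ω‖ ^ 2 ∂μ := by
    have hexp : ∀ ω, MA ω ^ 2 = ∑ j ∈ s, ∑ k ∈ s, (D j * D k) ω := by
      intro ω
      have h1 : MA ω = ∑ k ∈ s, D k ω := by rw [hMAdef, Finset.sum_apply]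
      rw [sq, h1, Finset.sum_mul_sum]
      simp [Pi.mul_apply]
    have hint : ∫ ω, MA ω ^ 2 ∂μ = ∑ j ∈ s, ∑ k ∈ s, ∫ ω, (D j * D k) ω ∂μ := by
      simp_rw [hexp]
      rw [integral_finset_sum _ fun j _ => integrable_finset_sum _ fun k _ => hDDi j k]
      exact Finset.sum_congr rfl fun j _ => integral_finset_sum _ fun k _ => hDDi j k
    rw [hint]
    have hsplit : ∀ j ∈ s, ∑ k ∈ s, ∫ ω, (D j * D k) ω ∂μ = ∫ ω, (D j * D j) ω ∂μ := by
      intro j hj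
      have : ∀ k ∈ s, ∫ ω, (D j * D k) ω ∂μ
          = if j = k then ∫ ω, (D j * D j) ω ∂μ else 0 := by
        intro k _
        split_ifs with h
        · rw [h]
        · rcases lt_or_gt_of_ne h with h' | h'
          · exact hod j k h'
          · rw [show D j * D k = D k * D j from mul_comm _ _]
            exact hod k j h'
      rw [Finset.sum_congr rfl this, Finset.sum_ite_eq s j fun _ => ∫ ω, (D j * D j) ω ∂μ,
        if_pos hj]
    rw [Finset.sum_congr rfl hsplit, Finset.mul_sum]
    exact Finset.sum_le_sum fun k _ => hdiag k
  have hMAabs : ∫ ω, |MA ω| ∂μ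
      ≤ ((∫ ω, MA ω ^ 2 ∂μ) + t ^ 2) / (2 * t) := by
    have hpt : ∀ ω, |MA ω| ≤ (MA ω ^ 2 + t ^ 2) / (2 * t) := by
      intro ω
      have h2t : (0:ℝ) < 2 * t := by linarith
      rw [le_div_iff₀ h2t]
      nlinarith [sq_nonneg (|MA ω| - t), sq_abs (MA ω), abs_nonneg (MA ω)]
    calc ∫ ω, |MA ω| ∂μ ≤ ∫ ω, (MA ω ^ 2 + t ^ 2) / (2 * t) ∂μ :=
          integral_mono hMAi.abs (((hMA2i.add (integrable_const (t^2))).div_const _)) hpt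
      _ = ((∫ ω, MA ω ^ 2 ∂μ) + t ^ 2) / (2 * t) := by
          simp_rw [div_eq_mul_inv]
          rw [integral_mul_const, integral_add hMA2i (integrable_const _), integral_const]
          simp
  -- the tail part
  set NB : Ω → ℝ := ∑ k ∈ s, (μ[L k | 𝓕 (k - 1)] - L k) with hNBdef
  have hNBki : ∀ k, Integrable (μ[L k | 𝓕 (k - 1)] - L k) μ := fun k =>
    integrable_condExp.sub (hLi k)
  have hNBi : Integrable NB μ := integrable_finset_sum' _ fun k _ => hNBki k
  have htail : ∫ ω, |NB ω| ∂μ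
      ≤ ∑ k ∈ s, ∫ ω, (A k).indicator (fun ω'' => ‖X k ω''‖ ^ 2) ω ∂μ := by
    have h1 : ∫ ω, |NB ω| ∂μ ≤ ∑ k ∈ s, ∫ ω, |(μ[L k | 𝓕 (k - 1)] - L k) ω| ∂μ := by
      rw [← integral_finset_sum _ fun k (_ : k ∈ s) => (hNBki k).abs]
      refine integral_mono hNBi.abs (integrable_finset_sum _ fun k _ => (hNBki k).abs)
        fun ω => ?_
      have h2 : NB ω = ∑ k ∈ s, ((μ[L k | 𝓕 (k - 1)]) ω - L k ω) := by
        rw [hNBdef, Finset.sum_apply]; rfl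
      rw [h2]
      exact Finset.abs_sum_le_sum_abs _ _
    refine h1.trans (Finset.sum_le_sum fun k _ => ?_)
    have hind_i : Integrable ((A k).indicator fun ω'' => ‖X k ω''‖ ^ 2) μ :=
      (hX2i k).indicator (hA0 k)
    have h3 : ∫ ω, |(μ[L k | 𝓕 (k - 1)] - L k) ω| ∂μ
        ≤ ∫ ω, |(μ[L k | 𝓕 (k - 1)]) ω| ∂μ + ∫ ω, |L k ω| ∂μ := by
      rw [← integral_add integrable_condExp.abs (hLi k).abs]
      exact integral_mono (hNBki k).abs (integrable_condExp.abs.add (hLi k).abs)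
        fun ω => abs_sub _ _
    have h4 : ∫ ω, |(μ[L k | 𝓕 (k - 1)]) ω| ∂μ ≤ ∫ ω, |L k ω| ∂μ := integral_abs_condExp_le _
    have h5 : (∫ ω, |L k ω| ∂μ) + ∫ ω, |L k ω| ∂μ
        ≤ ∫ ω, (A k).indicator (fun ω'' => ‖X k ω''‖ ^ 2) ω ∂μ := by
      rw [← two_mul, ← integral_const_mul]
      refine integral_mono ((hLi k).abs.const_mul 2) hind_i fun ω => ?_
      by_cases hω : ω ∈ A k
      · have e1 : L k ω = Y k ω := by rw [hLdef]; exact Set.indicator_of_mem hω (Y k)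
        have e2 : (A k).indicator (fun ω'' => ‖X k ω''‖ ^ 2) ω = ‖X k ω‖ ^ 2 :=
          Set.indicator_of_mem hω _
        show 2 * |L k ω| ≤ (A k).indicator (fun ω'' => ‖X k ω''‖ ^ 2) ω
        rw [e1, e2]
        linarith [hYb k ω]
      · have e1 : L k ω = 0 := by rw [hLdef]; exact Set.indicator_of_notMem hω (Y k)
        have e2 : (A k).indicator (fun ω'' => ‖X k ω''‖ ^ 2) ω = 0 :=
          Set.indicator_of_notMem hω _
        show 2 * |L k ω| ≤ (A k).indicator (fun ω'' => ‖X k ω''‖ ^ 2) ω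
        rw [e1, e2, abs_zero, mul_zero]
    linarith
  -- assembling
  have hYsum : ∀ k, Y k = L k + Sm k := fun k =>
    (Set.indicator_self_add_compl (A k) (Y k)).symm
  have hcondY : ∀ k, μ[Y k | 𝓕 (k - 1)] =ᵐ[μ] μ[L k | 𝓕 (k - 1)] + E k := by
    intro k
    rw [hYsum k]
    exact condExp_add (hLi k) (hSmi k) _
  have hae : ∀ᵐ ω ∂μ, ∀ k ∈ s, (μ[Y k | 𝓕 (k - 1)]) ω = (μ[L k | 𝓕 (k - 1)]) ω + E k ω :=
    (eventually_all_finset s).mpr fun k _ => ((hcondY k).mono fun ω h => by rw [h]; rfl)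
  have hABeq : ∀ᵐ ω ∂μ,
      |∑ k ∈ s, (μ[Y k | 𝓕 (k - 1)]) ω - ∑ k ∈ s, Y k ω| = |MA ω + NB ω| := by
    filter_upwards [hae] with ω h
    have h1 : ∑ k ∈ s, (μ[Y k | 𝓕 (k - 1)]) ω = ∑ k ∈ s, ((μ[L k | 𝓕 (k - 1)]) ω + E k ω) :=
      Finset.sum_congr rfl h
    have h2 : ∑ k ∈ s, Y k ω = ∑ k ∈ s, (L k ω + Sm k ω) :=
      Finset.sum_congr rfl fun k _ => by rw [hYsum k]; rfl
    have h3 : MA ω = ∑ k ∈ s, (E k ω - Sm k ω) := by rw [hMAdef, Finset.sum_apply]; rfl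
    have h4 : NB ω = ∑ k ∈ s, ((μ[L k | 𝓕 (k - 1)]) ω - L k ω) := by
      rw [hNBdef, Finset.sum_apply]; rfl
    rw [h1, h2, h3, h4, Finset.sum_add_distrib, Finset.sum_add_distrib,
      Finset.sum_sub_distrib, Finset.sum_sub_distrib]
    ring_nf
  calc ∫ ω, |∑ k ∈ s, (μ[Y k | 𝓕 (k - 1)]) ω - ∑ k ∈ s, Y k ω| ∂μ
      = ∫ ω, |MA ω + NB ω| ∂μ := integral_congr_ae hABeq
    _ ≤ ∫ ω, (|MA ω| + |NB ω|) ∂μ :=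
        integral_mono (hMAi.add hNBi).abs (hMAi.abs.add hNBi.abs) fun ω => abs_add_le _ _
    _ = (∫ ω, |MA ω| ∂μ) + ∫ ω, |NB ω| ∂μ := integral_add hMAi.abs hNBi.abs
    _ ≤ (ε ^ 2 * (∑ k ∈ s, ∫ ω, ‖X k ω‖ ^ 2 ∂μ) + t ^ 2) / (2 * t)
        + ∑ k ∈ s, ∫ ω, (A k).indicator (fun ω'' => ‖X k ω''‖ ^ 2) ω ∂μ := by
        refine add_le_add (hMAabs.trans ?_) htail
        have h2t : (0:ℝ) < 2 * t := by linarith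
        exact (div_le_div_iff_of_pos_right h2t).mpr (by linarith [hMAsq])


/-- Lemma 1 of the paper: for a 2-dimensional square-integrable adapted array with components
`U_{nk} = X_{nk,1}`, `V_{nk} = X_{nk,2}`, the unconditional Lindeberg-type condition (i) and the
uniform L² bound (ii) imply that
`∑_k E(U_{nk}V_{nk} | F_{n,k-1}) − ∑_k U_{nk}V_{nk} → 0` in `L¹`. -/
theorem stmt4 {Ω : Type*} {m0 : MeasurableSpace Ω} (μ : Measure Ω) [IsProbabilityMeasure μ]
    (kn : ℕ → ℕ)
    (𝓕 : ℕ → ℕ → MeasurableSpace Ω)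
    (hFmono : ∀ n, Monotone (𝓕 n)) (hFle : ∀ n k, 𝓕 n k ≤ m0)
    (X : ℕ → ℕ → Ω → EuclideanSpace ℝ (Fin 2))
    (hadapted : ∀ n k, StronglyMeasurable[𝓕 n k] (X n k))
    (hL2 : ∀ n k, MemLp (X n k) 2 μ)
    (hLind : ∀ ε > (0 : ℝ), Tendsto
      (fun n => ∑ k ∈ Finset.Icc 1 (kn n),
        ∫ ω, Set.indicator {ω'' | ε ≤ ‖X n k ω''‖} (fun ω'' => ‖X n k ω''‖ ^ 2) ω ∂μ)
      atTop (nhds 0))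
    (C : ℝ)
    (hbound : ∀ n, ∑ k ∈ Finset.Icc 1 (kn n), ∫ ω, ‖X n k ω‖ ^ 2 ∂μ ≤ C) :
    Tendsto
      (fun n => ∫ ω,
        |∑ k ∈ Finset.Icc 1 (kn n), (μ[fun ω' => X n k ω' 0 * X n k ω' 1 | 𝓕 n (k - 1)]) ω
          - ∑ k ∈ Finset.Icc 1 (kn n), X n k ω 0 * X n k ω 1| ∂μ)
      atTop (nhds 0) := by
  have hC0 : 0 ≤ C :=
    le_trans (Finset.sum_nonneg fun k _ => integral_nonneg fun ω => by positivity) (hbound 0)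
  rw [NormedAddCommGroup.tendsto_nhds_zero]
  intro δ hδ
  have hsq : 0 ≤ Real.sqrt C := Real.sqrt_nonneg C
  set ε : ℝ := δ / (2 * (Real.sqrt C + 1)) with hεdef
  have hε : 0 < ε := div_pos hδ (by positivity)
  have hεC : ε ^ 2 * C ≤ δ ^ 2 / 4 := by
    have h1 : Real.sqrt C ^ 2 = C := Real.sq_sqrt hC0
    rw [hεdef, div_pow, div_mul_eq_mul_div, div_le_div_iff₀ (by positivity) (by norm_num)]
    nlinarith [sq_nonneg δ, sq_nonneg (Real.sqrt C)]
  have ht : (0:ℝ) < δ / 2 := half_pos hδ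
  have hkey := fun n => key_lemma μ (kn n) (𝓕 n) (hFmono n) (hFle n) (X n) (hadapted n)
    (hL2 n) ε (δ / 2) hε ht
  filter_upwards [(hLind ε hε).eventually_lt_const (show (0:ℝ) < δ / 4 by linarith)] with n hn
  have hb := hkey n
  have hSn0 : 0 ≤ ∑ k ∈ Finset.Icc 1 (kn n), ∫ ω, ‖X n k ω‖ ^ 2 ∂μ :=
    Finset.sum_nonneg fun k _ => integral_nonneg fun ω => by positivity
  have hSnC := hbound n
  have hf0 : 0 ≤ ∫ ω,
      |∑ k ∈ Finset.Icc 1 (kn n), (μ[fun ω' => X n k ω' 0 * X n k ω' 1 | 𝓕 n (k - 1)]) ω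
        - ∑ k ∈ Finset.Icc 1 (kn n), X n k ω 0 * X n k ω 1| ∂μ :=
    integral_nonneg fun ω => abs_nonneg _
  rw [Real.norm_eq_abs, abs_of_nonneg hf0]
  have hεSn : ε ^ 2 * (∑ k ∈ Finset.Icc 1 (kn n), ∫ ω, ‖X n k ω‖ ^ 2 ∂μ) ≤ δ ^ 2 / 4 :=
    le_trans (mul_le_mul_of_nonneg_left hSnC (sq_nonneg ε)) hεC
  have hq : (ε ^ 2 * (∑ k ∈ Finset.Icc 1 (kn n), ∫ ω, ‖X n k ω‖ ^ 2 ∂μ) + (δ / 2) ^ 2)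
      / (2 * (δ / 2)) ≤ δ / 2 := by
    rw [div_le_iff₀ (by linarith : (0:ℝ) < 2 * (δ / 2))]
    nlinarith
  linarith [hb, hq, hn]
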